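/- Let p be a prime and let q = p^m be a power of p. Then for all integers a, b with 0 ≤ b ≤ a < q, one has (−1)^a · C(a, b) ≡ (−1)^b · C(q−1−b, q−1−a) (mod p). -/

import Mathlib

lemma choose_pow_sub_one_eq (p : ℕ) (hp : p.Prime) (m : ℕ) :
    ∀ k, k < p ^ m → (((p ^ m - 1).choose k : ZMod p) = (-1) ^ k) := by
  intro k
  induction k with
  | zero => intro _; simp
  | succ k ih =>
    intro hk
    have hk' : k < p ^ m := Nat.lt_of_succ_lt hk
    have hq : 1 ≤ p ^ m := Nat.one_le_pow _ _ hp.pos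
    have hpascal : (p ^ m - 1).choose k + (p ^ m - 1).choose (k + 1)
        = (p ^ m).choose (k + 1) := by
      have := Nat.succ_sub_one (p ^ m)
      calc (p ^ m - 1).choose k + (p ^ m - 1).choose (k + 1)
          = (p ^ m - 1 + 1).choose (k + 1) := (Nat.choose_succ_succ _ _).symm
        _ = (p ^ m).choose (k + 1) := by rw [Nat.sub_add_cancel hq]
    have hdvd : p ∣ (p ^ m).choose (k + 1) :=
      hp.dvd_choose_pow (Nat.succ_ne_zero k) (by omega)
    have h0 : ((p ^ m).choose (k + 1) : ZMod p) = 0 :=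
      (ZMod.natCast_eq_zero_iff _ _).mpr hdvd
    have := congrArg (fun n : ℕ => (n : ZMod p)) hpascal
    simp only [Nat.cast_add, h0] at this
    have : ((p ^ m - 1).choose (k + 1) : ZMod p) = -((p ^ m - 1).choose k : ZMod p) := by
      linear_combination this
    rw [this, ih hk', pow_succ]
    ring

/-- For `q = p^m` a power of the prime `p` and `0 ≤ b ≤ a < q`,
`(−1)^a · C(a,b) ≡ (−1)^b · C(q−1−b, q−1−a) (mod p)`. -/
theorem signed_binomial_symmetry (p : ℕ) (hp : p.Prime) (m a b : ℕ)
    (hba : b ≤ a) (haq : a < p ^ m) :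
    ((-1 : ZMod p) ^ a * (a.choose b : ZMod p) =
      (-1 : ZMod p) ^ b * ((p ^ m - 1 - b).choose (p ^ m - 1 - a) : ZMod p)) := by
  set n := p ^ m - 1 with hn
  have hq : 1 ≤ p ^ m := Nat.one_le_pow _ _ hp.pos
  have han : a ≤ n := by omega
  have hmul := Nat.choose_mul (n := n) hba
  have hsymm : (n - b).choose (a - b) = (n - b).choose (n - a) := by
    have h1 : a - b ≤ n - b := by omega
    have h2 : n - b - (a - b) = n - a := by omega
    rw [← Nat.choose_symm h1, h2]
  rw [hsymm] at hmul
  have hcast := congrArg (fun x : ℕ => (x : ZMod p)) hmul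
  simp only [Nat.cast_mul] at hcast
  rw [choose_pow_sub_one_eq p hp m a haq, choose_pow_sub_one_eq p hp m b (by omega)] at hcast
  exact hcast
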